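/- With the hypotheses above, the family {g_0} ∪ {g_n : n ≥ 1} (with g_0 = α/ρ_eq and g_n = c_n f_n') is complete in L²((-H,0), ρ_eq dz): if f ∈ L²((-H,0), ρ_eq dz) satisfies (f, g_n)_{L²_{ρ_eq}} = 0 for all n ≥ 0, then f = 0. Key steps: (f,g_0)=0 gives ∫_{-H}^0 f = 0; setting F(z) = ∫_{-H}^z f, one has F(-H)=F(0)=0 and (F, f_n)_{L²(ρ_eq N²)} = 0 for all n ≥ 1, hence F = 0 and f = 0. -/

import Mathlib

open MeasureTheory intervalIntegral

/-- Completeness of the family `{g_0} ∪ {g_n = c_n f_n' : n ≥ 1}` in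
`L²((-H,0), ρ_eq dz)`: if `u` is orthogonal to all `g_n`, `n ≥ 0`, then `u = 0`. -/
theorem g_family_complete
    (H g : ℝ) (hH : 0 < H) (hg : 0 < g)
    (ρ : ℝ → ℝ) (K : NNReal) (hρLip : LipschitzOnWith K ρ (Set.Icc (-H) 0))
    (ρmin : ℝ) (hρmin : 0 < ρmin) (hρlow : ∀ z ∈ Set.Icc (-H) 0, ρmin ≤ ρ z)
    (N2 : ℝ → ℝ) (hN2def : ∀ z ∈ Set.Icc (-H) 0, N2 z = -g * deriv ρ z / ρ z)
    (N0 : ℝ) (hN0 : 0 < N0) (hN2low : ∀ z ∈ Set.Icc (-H) 0, N0 ≤ N2 z)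
    (f : ℕ → ℝ → ℝ) (c : ℕ → ℝ) (hc : ∀ n, 1 ≤ n → 0 < c n)
    (hreg : ∀ n, 1 ≤ n → ContDiff ℝ 2 (f n))
    (hSL : ∀ n, 1 ≤ n → ∀ z ∈ Set.Ioo (-H) 0,
      deriv (fun y => ρ y * deriv (f n) y) z + ρ z * N2 z / (c n) ^ 2 * f n z = 0)
    (hBC : ∀ n, 1 ≤ n → f n (-H) = 0 ∧ f n 0 = 0)
    (hON : ∀ m n, 1 ≤ m → 1 ≤ n →
      (∫ z in (-H)..0, f m z * f n z * (ρ z * N2 z)) = if m = n then 1 else 0)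
    -- `(f_n)_{n≥1}` is a (complete) orthonormal basis of `L²((-H,0), ρ_eq N² dz)`:
    (hbasis : ∀ F : ℝ → ℝ, Continuous F →
      (∀ n, 1 ≤ n → (∫ z in (-H)..0, F z * f n z * (ρ z * N2 z)) = 0) →
      ∀ z ∈ Set.Icc (-H) 0, F z = 0)
    (α : ℝ) (hα : α = (Real.sqrt (∫ z in (-H)..0, (ρ z)⁻¹))⁻¹) :
    ∀ u : ℝ → ℝ, Continuous u →
      (∫ z in (-H)..0, u z * (α / ρ z) * ρ z) = 0 →
      (∀ n, 1 ≤ n → (∫ z in (-H)..0, u z * (c n * deriv (f n) z) * ρ z) = 0) →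
      ∀ z ∈ Set.Icc (-H) 0, u z = 0 := by
  intro u hu hu0 huorth
  have hHle : (-H) ≤ 0 := by linarith
  have hHlt : (-H) < 0 := by linarith
  have hIcc : Set.uIcc (-H) 0 = Set.Icc (-H) 0 := Set.uIcc_of_le hHle
  have hρcont : ContinuousOn ρ (Set.Icc (-H) 0) := hρLip.continuousOn
  have hρpos : ∀ z ∈ Set.Icc (-H) 0, 0 < ρ z := fun z hz =>
    lt_of_lt_of_le hρmin (hρlow z hz)
  have hρne : ∀ z ∈ Set.Icc (-H) 0, ρ z ≠ 0 := fun z hz => (hρpos z hz).ne'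
  -- ρ is differentiable on Icc (otherwise deriv ρ z = 0 and N2 z = 0 < N0)
  have hρdiff : ∀ z ∈ Set.Icc (-H) 0, DifferentiableAt ℝ ρ z := by
    intro z hz
    by_contra h
    have hd : deriv ρ z = 0 := deriv_zero_of_not_differentiableAt h
    have h2 := hN2low z hz
    rw [hN2def z hz, hd] at h2
    simp at h2
    linarith
  -- ρ z * N2 z = -g * deriv ρ z on Icc
  have hρN2 : ∀ z ∈ Set.Icc (-H) 0, ρ z * N2 z = -g * deriv ρ z := by
    intro z hz
    rw [hN2def z hz]
    field_simp [hρne z hz]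
  -- α > 0
  have hαpos : 0 < α := by
    have hintρ : IntervalIntegrable (fun z => (ρ z)⁻¹) volume (-H) 0 := by
      apply ContinuousOn.intervalIntegrable
      rw [hIcc]
      exact hρcont.inv₀ hρne
    have hpos : (0:ℝ) < ∫ z in (-H)..0, (ρ z)⁻¹ :=
      intervalIntegral_pos_of_pos_on hintρ
        (fun x hx => inv_pos.2 (hρpos x ⟨hx.1.le, hx.2.le⟩)) hHlt
    rw [hα]
    exact inv_pos.2 (Real.sqrt_pos.2 hpos)
  -- ∫ u = 0
  have huint : ∀ a b : ℝ, IntervalIntegrable u volume a b := fun a b =>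
    hu.intervalIntegrable a b
  have hmean : (∫ z in (-H)..0, u z) = 0 := by
    have h1 : (∫ z in (-H)..0, u z * (α / ρ z) * ρ z) = ∫ z in (-H)..0, α * u z := by
      apply intervalIntegral.integral_congr
      intro z hz
      rw [hIcc] at hz
      field_simp [hρne z hz]
    rw [h1, intervalIntegral.integral_const_mul] at hu0
    exact (mul_eq_zero.1 hu0).resolve_left hαpos.ne'
  -- the primitive F
  set F : ℝ → ℝ := fun z => ∫ t in (-H)..z, u t with hFdef
  have hF' : ∀ z, HasDerivAt F (u z) z := by
    intro z
    exact intervalIntegral.integral_hasDerivAt_right (huint _ _)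
      ⟨Set.univ, Filter.univ_mem, hu.aestronglyMeasurable.restrict⟩ hu.continuousAt
  have hFc : Continuous F := by
    have : Differentiable ℝ F := fun z => (hF' z).differentiableAt
    exact this.continuous
  have hFa : F (-H) = 0 := intervalIntegral.integral_same
  have hFb : F 0 = 0 := hmean
  -- orthogonality of F to all f_n in the ρ N² inner product
  have hForth : ∀ n, 1 ≤ n →
      (∫ z in (-H)..0, F z * f n z * (ρ z * N2 z)) = 0 := by
    intro n hn
    have hcn : 0 < c n := hc n hn
    have hf2 := hreg n hn
    set φ : ℝ → ℝ := fun y => ρ y * deriv (f n) y with hφdef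
    have hfd' : Differentiable ℝ (deriv (f n)) := by
      have h2 : ContDiff ℝ ((1:ℕ∞)+1) (f n) := by
        exact_mod_cast hf2
      exact ((contDiff_succ_iff_deriv.mp h2).2.2.differentiable (by simp))
    have hfd'c : Continuous (deriv (f n)) := hfd'.continuous
    have hφcont : ContinuousOn φ (Set.Icc (-H) 0) :=
      hρcont.mul hfd'c.continuousOn
    have hφdiffAt : ∀ x ∈ Set.Ioo (-H) 0, DifferentiableAt ℝ φ x := by
      intro x hx
      exact (hρdiff x ⟨hx.1.le, hx.2.le⟩).mul (hfd' x)
    -- rearranged Sturm-Liouville equation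
    have hSL' : ∀ z ∈ Set.Ioo (-H) 0,
        deriv φ z = -(ρ z * N2 z / (c n) ^ 2 * f n z) := by
      intro z hz
      have := hSL n hn z hz
      linarith
    -- bound for |f n| on Icc
    obtain ⟨M, hM⟩ := isCompact_Icc.exists_bound_of_continuousOn
      (s := Set.Icc (-H) 0) hf2.continuous.continuousOn
    have hM0 : 0 ≤ M := le_trans (norm_nonneg _) (hM (-H) ⟨le_rfl, hHle⟩)
    -- bound for |deriv ρ| on Ioo
    have hρ'bd : ∀ z ∈ Set.Ioo (-H) 0, |deriv ρ z| ≤ K := by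
      intro z hz
      have hnbd : Set.Icc (-H) 0 ∈ nhds z := Icc_mem_nhds hz.1 hz.2
      have h1 : ‖fderiv ℝ ρ z‖ ≤ K := norm_fderiv_le_of_lipschitzOn ℝ hnbd hρLip
      have h2 : deriv ρ z = fderiv ℝ ρ z 1 := rfl
      calc |deriv ρ z| = ‖fderiv ℝ ρ z 1‖ := by rw [h2]; rfl
        _ ≤ ‖fderiv ℝ ρ z‖ * ‖(1:ℝ)‖ := (fderiv ℝ ρ z).le_opNorm 1
        _ ≤ K * 1 := by rw [norm_one]; exact mul_le_mul_of_nonneg_right h1 zero_le_one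
        _ = K := mul_one _
    -- integrability of deriv φ
    have hv' : IntervalIntegrable (deriv φ) volume (-H) 0 := by
      rw [intervalIntegrable_iff_integrableOn_Ioo_of_le hHle]
      refine Measure.integrableOn_of_bounded (μ := volume) (s := Set.Ioo (-H) 0)
        (M := g * K * M / (c n) ^ 2) (measure_Ioo_lt_top).ne
        ((measurable_deriv φ).aestronglyMeasurable) ?_
      · rw [ae_restrict_iff' measurableSet_Ioo]
        filter_upwards with z hz
        have hzI : z ∈ Set.Icc (-H) 0 := ⟨hz.1.le, hz.2.le⟩
        have h1 : deriv φ z = -(-g * deriv ρ z / (c n) ^ 2 * f n z) := by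
          rw [hSL' z hz, hρN2 z hzI]
        rw [Real.norm_eq_abs, h1, abs_neg, abs_mul, abs_div, abs_mul, abs_neg,
          abs_of_pos hg, abs_of_pos (pow_pos hcn 2)]
        have hfz : |f n z| ≤ M := by
          have := hM z hzI; rwa [Real.norm_eq_abs] at this
        calc g * |deriv ρ z| / (c n) ^ 2 * |f n z|
            ≤ g * K / (c n) ^ 2 * M := by
              gcongr
              exact hρ'bd z hz
          _ = g * K * M / (c n) ^ 2 := by ring
    -- integration by parts
    have hIBP : (∫ z in (-H)..0, F z * deriv φ z)
        = F 0 * φ 0 - F (-H) * φ (-H) - ∫ z in (-H)..0, u z * φ z := by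
      apply intervalIntegral.integral_mul_deriv_eq_deriv_mul_of_hasDerivAt
      · rw [hIcc]; exact hFc.continuousOn
      · rw [hIcc]; exact hφcont
      · intro x hx
        exact hF' x
      · intro x hx
        rw [min_eq_left hHle, max_eq_right hHle] at hx
        exact (hφdiffAt x hx).hasDerivAt
      · exact huint _ _
      · exact hv'
    -- ∫ u φ = 0
    have huφ : (∫ z in (-H)..0, u z * φ z) = 0 := by
      have h1 : (∫ z in (-H)..0, u z * (c n * deriv (f n) z) * ρ z)
          = ∫ z in (-H)..0, c n * (u z * φ z) := by
        apply intervalIntegral.integral_congr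
        intro z _
        simp only [hφdef]
        ring
      rw [huorth n hn] at h1
      rw [intervalIntegral.integral_const_mul] at h1
      exact (mul_eq_zero.1 h1.symm).resolve_left hcn.ne'
    -- rewrite the target integral using the SL equation
    have hcongr : (∫ z in (-H)..0, F z * f n z * (ρ z * N2 z))
        = ∫ z in (-H)..0, (-(c n) ^ 2) * (F z * deriv φ z) := by
      apply intervalIntegral.integral_congr_ae
      have h0 : ∀ᵐ (x : ℝ), x ≠ (0:ℝ) := by
        have : volume ({(0:ℝ)} : Set ℝ) = 0 := Real.volume_singleton
        rw [ae_iff]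
        simpa using this
      filter_upwards [h0] with z hz0 hzI
      rw [Set.uIoc_of_le hHle] at hzI
      have hzo : z ∈ Set.Ioo (-H) 0 := ⟨hzI.1, lt_of_le_of_ne hzI.2 hz0⟩
      have hc2 : (c n) ^ 2 ≠ 0 := (pow_pos hcn 2).ne'
      rw [hSL' z hzo]
      field_simp
    rw [hcongr, intervalIntegral.integral_const_mul, hIBP, hFa, hFb, huφ]
    ring
  -- conclude: F vanishes on Icc, hence u vanishes on Ioo, hence on Icc
  have hF0 := hbasis F hFc hForth
  have hIoo : ∀ z ∈ Set.Ioo (-H) 0, u z = 0 := by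
    intro z hz
    have hmem : Set.Ioo (-H) 0 ∈ nhds z := Ioo_mem_nhds hz.1 hz.2
    have hev : F =ᶠ[nhds z] (fun _ => (0:ℝ)) :=
      Filter.eventuallyEq_of_mem hmem (fun t ht => hF0 t ⟨ht.1.le, ht.2.le⟩)
    have h1 : deriv F z = deriv (fun _ => (0:ℝ)) z := hev.deriv_eq
    have h2 : u z = deriv F z := ((hF' z).deriv).symm
    rw [h2, h1, deriv_const]
  have hEq : Set.EqOn u (fun _ => (0:ℝ)) (Set.Ioo (-H) 0) := fun z hz => hIoo z hz
  have hcl : Set.EqOn u (fun _ => (0:ℝ)) (closure (Set.Ioo (-H) 0)) :=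
    hEq.closure hu continuous_const
  intro z hz
  have : closure (Set.Ioo (-H) 0) = Set.Icc (-H) 0 := closure_Ioo hHlt.ne
  rw [this] at hcl
  exact hcl hz
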